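/- For all positive integers a, c, every real m ≥ 2, and every real z < 1: H_{a,c}(z;m) equals 1/(c−1)! times the (c−1)-st derivative at z of the function z ↦ H_{a,1}(z;m). -/

import Mathlib

open MeasureTheory Real Set

/-- One-variable hypergeometric family `H_{a,b}(z;m)` from the rearrangement lemma. -/
noncomputable def Hab (a b : ℕ) (m z : ℝ) : ℝ :=
  (Real.Gamma ((a : ℝ) + b + m / 2 - 2) / (Real.Gamma a * Real.Gamma b)) *
    ∫ t in (0:ℝ)..1, (1 - t) ^ (a - 1) * t ^ (b - 1) *
      (1 - z * t) ^ (-((a : ℝ) + b + m / 2 - 2))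

noncomputable def Gint (a k : ℕ) (e z : ℝ) : ℝ :=
  ∫ t in (0:ℝ)..1, (1 - t) ^ (a - 1) * t ^ k * (1 - z * t) ^ (-e)

lemma base_pos {w t : ℝ} (hw : w < 1) (ht0 : 0 ≤ t) (ht1 : t ≤ 1) : 0 < 1 - w * t := by
  rcases eq_or_lt_of_le ht0 with h | h
  · simp [← h]
  · nlinarith [mul_pos (sub_pos.2 hw) h]

lemma contOn (a k : ℕ) (e w : ℝ) (hw : w < 1) :
    ContinuousOn (fun t : ℝ => (1 - t) ^ (a - 1) * t ^ k * (1 - w * t) ^ (-e)) (Icc 0 1) := by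
  apply ContinuousOn.mul
  · exact Continuous.continuousOn (by continuity)
  · exact (Continuous.continuousOn (by continuity)).rpow_const
      (fun t ht => Or.inl (base_pos hw ht.1 ht.2).ne')

lemma Gint_integrable (a k : ℕ) (e w : ℝ) (hw : w < 1) :
    IntervalIntegrable (fun t : ℝ => (1 - t) ^ (a - 1) * t ^ k * (1 - w * t) ^ (-e))
      volume 0 1 := by
  apply ContinuousOn.intervalIntegrable
  rw [uIcc_of_le zero_le_one]
  exact contOn a k e w hw

lemma Gderiv (a k : ℕ) (e : ℝ) (he : 0 < e) (z : ℝ) (hz : z < 1) :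
    HasDerivAt (fun w => Gint a k e w) (e * Gint a (k + 1) (e + 1) z) z := by
  set ε : ℝ := (1 - z) / 2 with hε
  have hεpos : 0 < ε := by rw [hε]; linarith
  set δ : ℝ := min 1 ((1 - z) / 2) with hδ
  have hδpos : 0 < δ := lt_min one_pos (by linarith)
  -- for x in the ball, x < 1 and 1 - x*t ≥ δ on [0,1]
  have hball : ∀ x ∈ Metric.ball z ε, x < 1 := by
    intro x hx
    rw [Metric.mem_ball, Real.dist_eq, abs_lt] at hx
    linarith [hx.2]
  have hlb : ∀ x ∈ Metric.ball z ε, ∀ t ∈ Icc (0:ℝ) 1, δ ≤ 1 - x * t := by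
    intro x hx t ht
    rw [Metric.mem_ball, Real.dist_eq, abs_lt] at hx
    rcases le_or_gt x 0 with h | h
    · have : x * t ≤ 0 := mul_nonpos_of_nonpos_of_nonneg h ht.1
      have : δ ≤ 1 := min_le_left _ _
      linarith
    · have h1 : x * t ≤ x := by nlinarith [ht.1, ht.2]
      have h2 : δ ≤ (1 - z) / 2 := min_le_right _ _
      linarith [hx.2]
  have key := intervalIntegral.hasDerivAt_integral_of_dominated_loc_of_deriv_le
    (F := fun x t => (1 - t) ^ (a - 1) * t ^ k * (1 - x * t) ^ (-e))
    (F' := fun x t => e * ((1 - t) ^ (a - 1) * t ^ (k + 1) * (1 - x * t) ^ (-(e + 1))))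
    (x₀ := z) (a := (0:ℝ)) (b := 1) (μ := volume)
    (bound := fun _ => e * δ ^ (-(e + 1)))
    (Metric.ball_mem_nhds z hεpos) ?meas ?int ?meas' ?bound ?bint ?diff
  · have h2 := key.2
    rw [intervalIntegral.integral_const_mul] at h2
    exact h2
  case meas =>
    filter_upwards [Iio_mem_nhds hz] with x hx
    have := ((contOn a k e x hx).aestronglyMeasurable measurableSet_Icc (μ := volume))
    refine this.mono_measure (Measure.restrict_mono ?_ le_rfl)
    rw [uIoc_of_le zero_le_one]
    exact Ioc_subset_Icc_self
  case int => exact Gint_integrable a k e z hz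
  case meas' =>
    have := ((contOn a (k + 1) (e + 1) z hz).aestronglyMeasurable measurableSet_Icc
      (μ := volume)).const_mul e
    refine this.mono_measure (Measure.restrict_mono ?_ le_rfl)
    rw [uIoc_of_le zero_le_one]
    exact Ioc_subset_Icc_self
  case bound =>
    refine Filter.Eventually.of_forall fun t ht x hx => ?_
    rw [uIoc_of_le zero_le_one] at ht
    have ht0 : 0 ≤ t := ht.1.le
    have ht1 : t ≤ 1 := ht.2
    have hb : δ ≤ 1 - x * t := hlb x hx t ⟨ht0, ht1⟩
    have hbase : 0 < 1 - x * t := lt_of_lt_of_le hδpos hb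
    have hA0 : (0:ℝ) ≤ (1 - t) ^ (a - 1) * t ^ (k + 1) * (1 - x * t) ^ (-(e + 1)) :=
      mul_nonneg (mul_nonneg (pow_nonneg (by linarith) _) (pow_nonneg ht0 _))
        (Real.rpow_nonneg hbase.le _)
    rw [Real.norm_eq_abs, abs_mul, abs_of_nonneg hA0, abs_of_pos he]
    refine mul_le_mul_of_nonneg_left ?_ he.le
    have hB : (1 - t) ^ (a - 1) * t ^ (k + 1) ≤ 1 :=
      mul_le_one₀ (pow_le_one₀ (by linarith) (by linarith)) (pow_nonneg ht0 _)
        (pow_le_one₀ ht0 ht1)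
    calc (1 - t) ^ (a - 1) * t ^ (k + 1) * (1 - x * t) ^ (-(e + 1))
        ≤ (1 - x * t) ^ (-(e + 1)) :=
          mul_le_of_le_one_left (Real.rpow_nonneg hbase.le _) hB
      _ ≤ δ ^ (-(e + 1)) := Real.rpow_le_rpow_of_nonpos hδpos hb (by linarith)
  case bint => exact intervalIntegrable_const
  case diff =>
    refine Filter.Eventually.of_forall fun t ht x hx => ?_
    rw [uIoc_of_le zero_le_one] at ht
    have hx1 : x < 1 := hball x hx
    have hbase : 0 < 1 - x * t := base_pos hx1 ht.1.le ht.2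
    have hin : HasDerivAt (fun y : ℝ => 1 - y * t) (-t) x := by
      simpa using ((hasDerivAt_id x).mul_const t).const_sub 1
    have hr : HasDerivAt (fun y : ℝ => y ^ (-e)) ((-e) * (1 - x * t) ^ (-e - 1)) (1 - x * t) :=
      Real.hasDerivAt_rpow_const (Or.inl hbase.ne')
    have hc := (hr.comp x hin).const_mul ((1 - t) ^ (a - 1) * t ^ k)
    refine HasDerivAt.congr_deriv hc ?_
    show _ = e * ((1 - t) ^ (a - 1) * t ^ (k + 1) * (1 - x * t) ^ (-(e + 1)))
    rw [pow_succ, show -(e + 1) = -e - 1 by ring]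
    ring

lemma iter_deriv (a : ℕ) (C e : ℝ) (he : 1 ≤ e) (k : ℕ) :
    ∀ z, z < 1 → iteratedDeriv k (fun w => C * Gint a 0 e w) z
      = C * (∏ i ∈ Finset.range k, (e + i)) * Gint a k (e + k) z := by
  induction k with
  | zero => intro z hz; simp
  | succ k ih =>
    intro z hz
    rw [iteratedDeriv_succ]
    have hev : iteratedDeriv k (fun w => C * Gint a 0 e w)
        =ᶠ[nhds z] fun w => C * (∏ i ∈ Finset.range k, (e + i)) * Gint a k (e + k) w := by
      filter_upwards [Iio_mem_nhds hz] with w hw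
      exact ih w hw
    rw [hev.deriv_eq]
    have hpos : 0 < e + k := by positivity
    have hd := (Gderiv a k (e + k) hpos z hz).const_mul (C * ∏ i ∈ Finset.range k, (e + i))
    rw [hd.deriv]
    rw [Finset.prod_range_succ]
    push_cast
    rw [show e + ((k:ℝ) + 1) = e + ↑k + 1 by ring]
    ring

lemma gamma_prod (e : ℝ) (he : 0 < e) :
    ∀ k : ℕ, Real.Gamma (e + k) = Real.Gamma e * ∏ i ∈ Finset.range k, (e + i) := by
  intro k
  induction k with
  | zero => simp
  | succ k ih =>
    have hne : e + (k:ℝ) ≠ 0 := by positivity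
    rw [Finset.prod_range_succ]
    push_cast
    rw [show e + ((k:ℝ) + 1) = (e + (k:ℝ)) + 1 by ring, Real.Gamma_add_one hne, ih]
    ring

/-- `H_{a,c}` is `1/(c−1)!` times the `(c−1)`-st derivative of `H_{a,1}`. -/
theorem stmt12 (a c : ℕ) (ha : 0 < a) (hc : 0 < c) (m : ℝ) (hm : 2 ≤ m)
    (z : ℝ) (hz : z < 1) :
    Hab a c m z =
      (1 / (Nat.factorial (c - 1) : ℝ)) *
        iteratedDeriv (c - 1) (fun w => Hab a 1 m w) z := by
  obtain ⟨k, rfl⟩ : ∃ k, c = k + 1 := ⟨c - 1, (Nat.succ_pred_eq_of_pos hc).symm⟩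
  set e : ℝ := (a : ℝ) + 1 + m / 2 - 2 with hedef
  have ha1 : (1:ℝ) ≤ (a:ℝ) := by exact_mod_cast ha
  have he : 1 ≤ e := by rw [hedef]; linarith
  have hepos : 0 < e := by linarith
  have hHab1 : (fun w => Hab a 1 m w)
      = fun w => (Real.Gamma e / (Real.Gamma a * Real.Gamma 1)) * Gint a 0 e w := by
    funext w
    simp only [Hab, Gint, hedef, Nat.cast_one]
  have hk1 : (k + 1) - 1 = k := by omega
  rw [hk1, hHab1, iter_deriv a _ e he k z hz]
  have hHabc : Hab a (k + 1) m z
      = (Real.Gamma (e + k) / (Real.Gamma a * Real.Gamma ((k:ℝ) + 1))) * Gint a k (e + k) z := by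
    simp only [Hab, Gint, hedef, hk1]
    push_cast
    rw [show (a:ℝ) + ((k:ℝ) + 1) + m / 2 - 2 = (a:ℝ) + 1 + m / 2 - 2 + (k:ℝ) by ring]
  rw [hHabc, gamma_prod e hepos k, Real.Gamma_nat_eq_factorial, Real.Gamma_one]
  have hGa : Real.Gamma a ≠ 0 := (Real.Gamma_pos_of_pos (by exact_mod_cast ha)).ne'
  simp only [div_eq_mul_inv, mul_inv, mul_one]
  ring
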